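/- Let I : ℝⁿ → ℝ be monotone, constant linear, and quasi-concave (I(a) = I(b) implies I(α·a + (1−α)·b) ≥ I(a) for α ∈ (0,1)). Then I is concave. -/
import Mathlib


theorem stmt_17 (n : ℕ) (I : (Fin n → ℝ) → ℝ)
    (hmono : ∀ a b : Fin n → ℝ, (∀ i, a i ≤ b i) → I a ≤ I b)
    (hcl : ∀ (a : Fin n → ℝ) (β c : ℝ), 0 < β →
      I (fun i => β * a i + c) = β * I a + c)
    (hqc : ∀ (a b : Fin n → ℝ) (α : ℝ), α ∈ Set.Ioo (0:ℝ) 1 → I a = I b →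
      I a ≤ I (fun i => α * a i + (1 - α) * b i)) :
    ∀ (a b : Fin n → ℝ) (α : ℝ), α ∈ Set.Icc (0:ℝ) 1 →
      α * I a + (1 - α) * I b ≤ I (fun i => α * a i + (1 - α) * b i) := by
  intro a b α hα
  obtain ⟨h0, h1⟩ := hα
  rcases eq_or_lt_of_le h0 with h|h0
  · subst h; simp
  rcases eq_or_lt_of_le h1 with h|h1
  · subst h; simp
  set c := I a - I b with hc
  have hb' : I a = I (fun i => b i + c) := by
    have := hcl b 1 c one_pos
    simp only [one_mul] at this
    rw [this]; ring
  have hq := hqc a (fun i => b i + c) α ⟨h0, h1⟩ hb'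
  have key : I (fun i => α * a i + (1 - α) * (b i + c)) =
      I (fun i => α * a i + (1 - α) * b i) + (1 - α) * c := by
    have h2 := hcl (fun i => α * a i + (1 - α) * b i) 1 ((1 - α) * c) one_pos
    simp only [one_mul] at h2
    rw [← h2]
    congr 1
    funext i
    ring
  rw [key] at hq
  nlinarith [hq]
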